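/- Let S be a finite interval of integers containing {2p−1, 2p, …, 2q+1} for integers p ≤ q, and let Q = Q[p,q] be the Nicolai supercharge on ℋ_S. Then for all integers k, l with p ≤ k < l ≤ q and every f ∈ Ξ̂_{k,l}, the following anticommutators vanish: Q Q(f) + Q(f) Q = 0, Q* Q(f) + Q(f) Q* = 0, Q Q(f)* + Q(f)* Q = 0, and Q* Q(f)* + Q(f)* Q* = 0. -/

import Mathlib

namespace Nicolai

/-- Configurations on the finite interval `S = {a, …, b}` of integers:
`true` = occupied, `false` = empty. -/
abbrev Config (a b : ℤ) : Type := {i : ℤ // i ∈ Finset.Icc a b} → Bool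

/-- The Hilbert space `ℋ_S` with orthonormal basis indexed by configurations. -/
abbrev Hs (a b : ℤ) : Type := EuclideanSpace ℂ (Config a b)

/-- The basis vector `e_g` associated to the configuration `g`. -/
noncomputable def e (a b : ℤ) (g : Config a b) : Hs a b := EuclideanSpace.single g 1

/-- The Jordan–Wigner sign exponent: the number of occupied sites strictly to the left of `i`. -/
noncomputable def signCount (a b : ℤ) (g : Config a b) (i : ℤ) : ℕ :=
  (Finset.univ.filter fun j : {x : ℤ // x ∈ Finset.Icc a b} => j.1 < i ∧ g j = true).card

/-- The annihilation operator `c_i` (zero if `i ∉ S`). -/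
noncomputable def cAnn (a b : ℤ) (i : ℤ) : Module.End ℂ (Hs a b) where
  toFun ψ := WithLp.toLp 2 fun g =>
    if hi : i ∈ Finset.Icc a b then
      if g ⟨i, hi⟩ = false then
        ((-1 : ℂ) ^ signCount a b g i) * ψ (Function.update g ⟨i, hi⟩ true)
      else 0
    else 0
  map_add' ψ φ := by
    rw [WithLp.ext_iff]
    funext g
    simp only [WithLp.ofLp_toLp, PiLp.add_apply]
    split_ifs <;> simp [mul_add]
  map_smul' c ψ := by
    rw [WithLp.ext_iff]
    funext g
    simp only [WithLp.ofLp_toLp, PiLp.smul_apply, smul_eq_mul, RingHom.id_apply]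
    split_ifs <;> ring

/-- The creation operator `c*_i` (zero if `i ∉ S`). -/
noncomputable def cCr (a b : ℤ) (i : ℤ) : Module.End ℂ (Hs a b) where
  toFun ψ := WithLp.toLp 2 fun g =>
    if hi : i ∈ Finset.Icc a b then
      if g ⟨i, hi⟩ = true then
        ((-1 : ℂ) ^ signCount a b g i) * ψ (Function.update g ⟨i, hi⟩ false)
      else 0
    else 0
  map_add' ψ φ := by
    rw [WithLp.ext_iff]
    funext g
    simp only [WithLp.ofLp_toLp, PiLp.add_apply]
    split_ifs <;> simp [mul_add]
  map_smul' c ψ := by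
    rw [WithLp.ext_iff]
    funext g
    simp only [WithLp.ofLp_toLp, PiLp.smul_apply, smul_eq_mul, RingHom.id_apply]
    split_ifs <;> ring

/-- `q_{2i} = c_{2i+1} c*_{2i} c_{2i−1}`. -/
noncomputable def qOp (a b i : ℤ) : Module.End ℂ (Hs a b) :=
  cAnn a b (2 * i + 1) * cCr a b (2 * i) * cAnn a b (2 * i - 1)

/-- The Nicolai supercharge `Q[k,l] = Σ_{i=k}^{l} q_{2i}`. -/
noncomputable def QNic (a b k l : ℤ) : Module.End ℂ (Hs a b) :=
  ∑ i ∈ Finset.Icc k l, qOp a b i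

/-- Membership in `Ξ̂_{k,l}`: a `{−1,+1}`-valued function on `{2k, …, 2l}` with no
forbidden sign triplet at interior even sites, constant on each two-site edge. -/
def memXi (k l : ℤ) (f : ℤ → ℤ) : Prop :=
  (∀ i ∈ Finset.Icc (2 * k) (2 * l), f i = 1 ∨ f i = -1) ∧
  (∀ i : ℤ, k < i → i < l →
    ¬(f (2 * i - 1) = -1 ∧ f (2 * i) = 1 ∧ f (2 * i + 1) = -1) ∧
    ¬(f (2 * i - 1) = 1 ∧ f (2 * i) = -1 ∧ f (2 * i + 1) = 1)) ∧
  f (2 * k) = f (2 * k + 1) ∧ f (2 * l - 1) = f (2 * l)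

/-- `ζ_i(+1) = c*_i`, `ζ_i(−1) = c_i`. -/
noncomputable def zeta (a b i : ℤ) (v : ℤ) : Module.End ℂ (Hs a b) :=
  if v = 1 then cCr a b i else if v = -1 then cAnn a b i else 0

/-- The local fermion operator `Q(f) = ζ_{2k}(f(2k)) ζ_{2k+1}(f(2k+1)) ⋯ ζ_{2l}(f(2l))`,
the product taken in increasing site order. -/
noncomputable def QF (a b k l : ℤ) (f : ℤ → ℤ) : Module.End ℂ (Hs a b) :=
  ((List.range (2 * l - 2 * k + 1).toNat).map
    (fun j => zeta a b (2 * k + (j : ℤ)) (f (2 * k + (j : ℤ))))).prod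

/-- `g` has a forbidden triplet at the even site `2i`. -/
def forbiddenAt (g : ℤ → Bool) (i : ℤ) : Prop :=
  (g (2 * i - 1) = false ∧ g (2 * i) = true ∧ g (2 * i + 1) = false) ∨
  (g (2 * i - 1) = true ∧ g (2 * i) = false ∧ g (2 * i + 1) = true)

/-- Membership in `Υ̂_{k,l}`: no forbidden triplet at interior even sites and the
open SUSY boundary condition (only the values on `{2k, …, 2l}` are relevant). -/
def memUps (k l : ℤ) (g : ℤ → Bool) : Prop :=
  (∀ i : ℤ, k < i → i < l → ¬ forbiddenAt g i) ∧
  g (2 * k) = g (2 * k + 1) ∧ g (2 * l - 1) = g (2 * l)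

/-- Extend a configuration on `S` to all of `ℤ` by `false`. -/
noncomputable def ext (a b : ℤ) (g : Config a b) : ℤ → Bool :=
  fun i => if h : i ∈ Finset.Icc a b then g ⟨i, h⟩ else false

/-- The charge `f ∈ Ξ̂_{k,l}` is applicable to the configuration `g`. -/
def applicable (k l : ℤ) (f : ℤ → ℤ) (g : ℤ → Bool) : Prop :=
  ∀ i : ℤ, 2 * k ≤ i → i ≤ 2 * l → (f i = 1 → g i = false) ∧ (f i = -1 → g i = true)

/-- The configuration `f·g` resulting from the action of the charge `f ∈ Ξ̂_{k,l}` on `g`. -/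
def applyCharge (k l : ℤ) (f : ℤ → ℤ) (g : ℤ → Bool) : ℤ → Bool :=
  fun i => if 2 * k ≤ i ∧ i ≤ 2 * l then decide (f i = 1) else g i

/-- `Reachable p q g₀ g`: `g` is obtained from `g₀` by finitely many applications of
applicable charges from `Ξ̂(p,q) = ⋃_{p ≤ k < l ≤ q} Ξ̂_{k,l}`. -/
inductive Reachable (p q : ℤ) : (ℤ → Bool) → (ℤ → Bool) → Prop
  | refl (g : ℤ → Bool) : Reachable p q g g
  | step {g₀ g : ℤ → Bool} (k l : ℤ) (f : ℤ → ℤ) :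
      Reachable p q g₀ g → p ≤ k → k < l → l ≤ q → memXi k l f → applicable k l f g →
      Reachable p q g₀ (applyCharge k l f g)

/-- The fermion parity operator `P e_g = (−1)^{#occupied sites} e_g`. -/
noncomputable def parity (a b : ℤ) : Module.End ℂ (Hs a b) where
  toFun ψ := WithLp.toLp 2 fun g =>
    ((-1 : ℂ) ^ (Finset.univ.filter fun j : {x : ℤ // x ∈ Finset.Icc a b} => g j = true).card)
      * ψ g
  map_add' ψ φ := by
    rw [WithLp.ext_iff]
    funext g
    simp only [WithLp.ofLp_toLp, PiLp.add_apply]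
    ring
  map_smul' c ψ := by
    rw [WithLp.ext_iff]
    funext g
    simp only [WithLp.ofLp_toLp, PiLp.smul_apply, smul_eq_mul, RingHom.id_apply]
    ring

section Helpers
theorem sc_update_of_not_lt {a b : ℤ} (g : Config a b) (x : {i : ℤ // i ∈ Finset.Icc a b})
    (v : Bool) (j : ℤ) (h : ¬ x.1 < j) :
    signCount a b (Function.update g x v) j = signCount a b g j := by
  unfold signCount
  congr 1
  apply Finset.filter_congr
  intro y _
  by_cases hy : y = x
  · subst hy; simp [h]
  · simp [Function.update_of_ne hy]

theorem sc_update_parity {a b : ℤ} (g : Config a b) (x : {i : ℤ // i ∈ Finset.Icc a b})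
    (v : Bool) (j : ℤ) (hv : v ≠ g x) (hlt : x.1 < j) :
    ((-1 : ℂ)) ^ signCount a b (Function.update g x v) j
      = -((-1 : ℂ)) ^ signCount a b g j := by
  have key : ∀ g' : Config a b, g' x = false →
      signCount a b (Function.update g' x true) j = signCount a b g' j + 1 := by
    intro g' hg'
    unfold signCount
    have hset : (Finset.univ.filter fun y : {i : ℤ // i ∈ Finset.Icc a b} =>
        y.1 < j ∧ (Function.update g' x true) y = true)
        = insert x (Finset.univ.filter fun y : {i : ℤ // i ∈ Finset.Icc a b} =>
            y.1 < j ∧ g' y = true) := by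
      ext y
      by_cases hy : y = x
      · subst hy; simp [hlt]
      · simp [Function.update_of_ne hy, hy]
    rw [hset, Finset.card_insert_of_notMem (by simp [hg'])]
  cases v
  · have hgx : g x = true := by revert hv; cases h : g x <;> simp [h]
    have h1 : Function.update (Function.update g x false) x true = g := by
      rw [Function.update_idem, ← hgx, Function.update_eq_self]
    have h2 : (Function.update g x false) x = false := by simp
    have := key (Function.update g x false) h2
    rw [h1] at this
    rw [this, pow_succ]
    ring
  · have hgx : g x = false := by revert hv; cases h : g x <;> simp [h]
    rw [key g hgx, pow_succ]
    ring

/-- The occupation value tested by `ζ_i(v)`. -/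
def bv (v : ℤ) : Bool := v == 1

theorem zeta_apply {a b : ℤ} (i v : ℤ) (hv : v = 1 ∨ v = -1) (ψ : Hs a b) (g : Config a b) :
    zeta a b i v ψ g = if hi : i ∈ Finset.Icc a b then
      (if g ⟨i, hi⟩ = bv v then ((-1 : ℂ) ^ signCount a b g i) *
        ψ (Function.update g ⟨i, hi⟩ (!(bv v))) else 0) else 0 := by
  rcases hv with hv | hv <;> subst hv <;>
    simp only [zeta, if_pos rfl, bv, if_true,
      (show ((-1 : ℤ) = 1) ↔ False by norm_num), if_false] <;> rfl

theorem zeta_eq_zero {a b : ℤ} (i v : ℤ) (h1 : ¬ v = 1) (h2 : ¬ v = -1) :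
    zeta a b i v = 0 := by simp [zeta, h1, h2]

theorem zeta_sq {a b : ℤ} (i v : ℤ) : zeta a b i v * zeta a b i v = 0 := by
  by_cases h1 : v = 1
  case neg =>
    by_cases h2 : v = -1
    case neg => rw [zeta_eq_zero i v h1 h2, mul_zero]
    case pos =>
      subst h2
      apply LinearMap.ext; intro ψ; rw [WithLp.ext_iff]; funext g
      simp only [Module.End.mul_apply, zeta_apply i (-1) (Or.inr rfl)]
      by_cases hi : (i : ℤ) ∈ Finset.Icc a b <;>
        simp [hi]
  case pos =>
    subst h1
    apply LinearMap.ext; intro ψ; rw [WithLp.ext_iff]; funext g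
    simp only [Module.End.mul_apply, zeta_apply i 1 (Or.inl rfl)]
    by_cases hi : (i : ℤ) ∈ Finset.Icc a b <;>
      simp [hi]
theorem zeta_anticomm {a b : ℤ} {i j : ℤ} (hij : i ≠ j) (v w : ℤ) :
    zeta a b i v * zeta a b j w + zeta a b j w * zeta a b i v = 0 := by
  by_cases hv : v = 1 ∨ v = -1
  case neg =>
    push_neg at hv
    rw [zeta_eq_zero i v hv.1 hv.2]; simp
  by_cases hw : w = 1 ∨ w = -1
  case neg =>
    push_neg at hw
    rw [zeta_eq_zero j w hw.1 hw.2]; simp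
  apply LinearMap.ext; intro ψ; rw [WithLp.ext_iff]; funext g
  simp only [LinearMap.add_apply, Module.End.mul_apply, LinearMap.zero_apply,
    PiLp.add_apply, PiLp.zero_apply, zeta_apply i v hv, zeta_apply j w hw]
  by_cases hi : i ∈ Finset.Icc a b
  case neg => simp [hi]
  by_cases hj : j ∈ Finset.Icc a b
  case neg => simp [hj]
  have hne1 : (⟨j, hj⟩ : {x : ℤ // x ∈ Finset.Icc a b}) ≠ ⟨i, hi⟩ := by
    intro h; exact hij (congrArg Subtype.val h).symm
  have hne2 : (⟨i, hi⟩ : {x : ℤ // x ∈ Finset.Icc a b}) ≠ ⟨j, hj⟩ := hne1.symm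
  simp only [dif_pos hi, dif_pos hj, Function.update_of_ne hne1, Function.update_of_ne hne2]
  by_cases hgi : g ⟨i, hi⟩ = bv v
  case neg => simp [hgi]
  by_cases hgj : g ⟨j, hj⟩ = bv w
  case neg => simp [hgj]
  simp only [if_pos hgi, if_pos hgj]
  have hvne : (!(bv v)) ≠ g ⟨i, hi⟩ := by rw [hgi]; exact Bool.not_ne_self _
  have hwne : (!(bv w)) ≠ g ⟨j, hj⟩ := by rw [hgj]; exact Bool.not_ne_self _
  rcases lt_or_gt_of_ne hij with hlt | hlt
  · rw [sc_update_parity g ⟨i, hi⟩ (!(bv v)) j hvne hlt,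
      sc_update_of_not_lt g ⟨j, hj⟩ (!(bv w)) i (not_lt.2 hlt.le),
      Function.update_comm hne2]
    ring
  · rw [sc_update_parity g ⟨j, hj⟩ (!(bv w)) i hwne hlt,
      sc_update_of_not_lt g ⟨i, hi⟩ (!(bv v)) j (not_lt.2 hlt.le),
      Function.update_comm hne1]
    ring
/-- Product of a list of `ζ` operators described by (site, value) pairs. -/
noncomputable def PL (a b : ℤ) (L : List (ℤ × ℤ)) : Module.End ℂ (Hs a b) :=
  (L.map fun p => zeta a b p.1 p.2).prod

@[simp] theorem PL_nil {a b : ℤ} : PL a b [] = 1 := rfl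
@[simp] theorem PL_cons {a b : ℤ} (p : ℤ × ℤ) (L : List (ℤ × ℤ)) :
    PL a b (p :: L) = zeta a b p.1 p.2 * PL a b L := by simp [PL]
@[simp] theorem PL_append {a b : ℤ} (L M : List (ℤ × ℤ)) :
    PL a b (L ++ M) = PL a b L * PL a b M := by simp [PL]

theorem zeta_mul_PL {a b : ℤ} (s v : ℤ) (L : List (ℤ × ℤ)) (h : ∀ p ∈ L, p.1 ≠ s) :
    zeta a b s v * PL a b L = ((-1 : ℂ) ^ L.length) • (PL a b L * zeta a b s v) := by
  induction L with
  | nil => simp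
  | cons p L ih =>
    have hps : p.1 ≠ s := h p (List.mem_cons_self)
    have hcomm : zeta a b s v * zeta a b p.1 p.2 = -(zeta a b p.1 p.2 * zeta a b s v) :=
      eq_neg_of_add_eq_zero_left (zeta_anticomm (fun hh => hps hh.symm) v p.2)
    rw [PL_cons, ← mul_assoc, hcomm, neg_mul, mul_assoc,
      ih (fun q hq => h q (List.mem_cons_of_mem _ hq))]
    rw [mul_smul_comm, List.length_cons, pow_succ, ← neg_smul, ← mul_assoc]
    congr 1
    ring

theorem kill {a b : ℤ} (s v : ℤ) (B : List (ℤ × ℤ)) (hB : ∀ p ∈ B, p.1 ≠ s)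
    (X Z : Module.End ℂ (Hs a b)) :
    X * (zeta a b s v * (PL a b B * (zeta a b s v * Z))) = 0 := by
  have h1 : zeta a b s v * (PL a b B * (zeta a b s v * Z))
      = ((-1 : ℂ) ^ B.length) • (PL a b B * ((zeta a b s v * zeta a b s v) * Z)) := by
    rw [← mul_assoc, zeta_mul_PL s v B hB, smul_mul_assoc]
    congr 1
    all_goals simp [mul_assoc]
  rw [h1, zeta_sq]
  simp

theorem PL_mul_PL {a b : ℤ} (L M : List (ℤ × ℤ)) (h : ∀ p ∈ L, ∀ q ∈ M, p.1 ≠ q.1) :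
    PL a b L * PL a b M = ((-1 : ℂ) ^ (L.length * M.length)) • (PL a b M * PL a b L) := by
  induction L with
  | nil => simp
  | cons p L ih =>
    rw [PL_cons, mul_assoc, ih (fun q hq r hr => h q (List.mem_cons_of_mem _ hq) r hr),
      mul_smul_comm, ← mul_assoc,
      zeta_mul_PL p.1 p.2 M (fun q hq => (h p (List.mem_cons_self) q hq).symm)]
    rw [smul_mul_assoc, smul_smul, mul_assoc, List.length_cons]
    congr 1
    rw [← pow_add]
    congr 1
    ring

theorem PL_anticomm_odd {a b : ℤ} (L M : List (ℤ × ℤ)) (h : ∀ p ∈ L, ∀ q ∈ M, p.1 ≠ q.1)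
    (hL : Odd L.length) (hM : Odd M.length) :
    PL a b L * PL a b M + PL a b M * PL a b L = 0 := by
  rw [PL_mul_PL L M h, Odd.neg_one_pow (hL.mul hM)]
  simp
theorem QF_eq_PL (a b k l : ℤ) (f : ℤ → ℤ) :
    QF a b k l f = PL a b ((List.range (2 * l - 2 * k + 1).toNat).map
      (fun j : ℕ => (2 * k + (j : ℤ), f (2 * k + (j : ℤ))))) := by
  unfold QF PL
  rw [List.map_map]
  congr 1
  simp only [List.bind_eq_flatMap, List.pure_def, List.map_flatMap, List.map_cons,
    List.map_nil, ← List.map_eq_flatMap]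
  rw [List.map_map]
  rfl

theorem QF_split (a b k l : ℤ) (f : ℤ → ℤ) (s : ℤ) (hkl : k ≤ l) (hs1 : 2 * k ≤ s)
    (hs2 : s ≤ 2 * l) :
    ∃ A B : List (ℤ × ℤ),
      QF a b k l f = PL a b A * (zeta a b s (f s) * PL a b B) ∧
      (∀ p ∈ A, p.1 < s) ∧ (∀ p ∈ B, s < p.1) := by
  set m : ℕ := (s - 2 * k).toNat with hm
  set r : ℕ := (2 * l - s).toNat with hr
  have hmz : (m : ℤ) = s - 2 * k := by omega
  have hn : (2 * l - 2 * k + 1).toNat = m + (r + 1) := by omega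
  set pair : ℕ → ℤ × ℤ := fun j : ℕ => (2 * k + (j : ℤ), f (2 * k + (j : ℤ))) with hpair
  refine ⟨(List.range m).map pair, (List.range r).map (fun j => pair (m + 1 + j)), ?_, ?_, ?_⟩
  · have hlist : (List.range ((2 * l - 2 * k + 1).toNat)).map pair
        = (List.range m).map pair ++ pair m :: (List.range r).map (fun j => pair (m + 1 + j)) := by
      rw [hn, List.range_add, List.map_append]
      congr 1
      rw [List.range_succ_eq_map, List.map_cons, List.map_map, List.map_cons, List.map_map]
      congr 1
      apply List.map_congr_left
      intro j hj
      simp only [Function.comp_apply]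
      try congr 1 <;> omega
    rw [QF_eq_PL, ← hpair, hlist, PL_append, PL_cons]
    have hms : 2 * k + (m : ℤ) = s := by omega
    have h1 : (pair m).1 = s := by show 2 * k + (m : ℤ) = s; omega
    have h2 : (pair m).2 = f s := by show f (2 * k + (m : ℤ)) = f s; rw [hms]
    rw [h1, h2]
  · intro p hp
    obtain ⟨j, hj, rfl⟩ := List.mem_map.mp hp
    have := List.mem_range.mp hj
    show 2 * k + (j : ℤ) < s
    omega
  · intro p hp
    obtain ⟨j, hj, rfl⟩ := List.mem_map.mp hp
    show s < 2 * k + ((m + 1 + j : ℕ) : ℤ)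
    push_cast
    omega

theorem local_anti (a b k l : ℤ) (f : ℤ → ℤ) (hkl : k ≤ l) (s v : ℤ) (hs1 : 2 * k ≤ s)
    (hs2 : s ≤ 2 * l) (hfs : f s = v) (T₁ T₂ : List (ℤ × ℤ))
    (hT1 : ∀ p ∈ T₁, p.1 ≠ s) (hT2 : ∀ p ∈ T₂, p.1 ≠ s) :
    PL a b (T₁ ++ (s, v) :: T₂) * QF a b k l f
      + QF a b k l f * PL a b (T₁ ++ (s, v) :: T₂) = 0 := by
  subst hfs
  obtain ⟨A, B, hQF, hA, hB⟩ := QF_split a b k l f s hkl hs1 hs2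
  have h1 := kill s (f s) (T₂ ++ A) (by
    intro p hp
    rcases List.mem_append.mp hp with h | h
    · exact hT2 p h
    · exact ne_of_lt (hA p h)) (PL a b T₁) (PL a b B)
  have h2 := kill s (f s) (B ++ T₁) (by
    intro p hp
    rcases List.mem_append.mp hp with h | h
    · exact (ne_of_lt (hB p h)).symm
    · exact hT1 p h) (PL a b A) (PL a b T₂)
  rw [PL_append] at h1 h2
  rw [hQF, PL_append, PL_cons]
  simp only [mul_assoc] at h1 h2 ⊢
  rw [h1, h2, add_zero]
theorem cAnn_apply (a b i : ℤ) (ψ : Hs a b) (g : Config a b) :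
    cAnn a b i ψ g = if hi : i ∈ Finset.Icc a b then
      (if g ⟨i, hi⟩ = false then ((-1 : ℂ) ^ signCount a b g i) *
        ψ (Function.update g ⟨i, hi⟩ true) else 0) else 0 := rfl

theorem cCr_apply (a b i : ℤ) (ψ : Hs a b) (g : Config a b) :
    cCr a b i ψ g = if hi : i ∈ Finset.Icc a b then
      (if g ⟨i, hi⟩ = true then ((-1 : ℂ) ^ signCount a b g i) *
        ψ (Function.update g ⟨i, hi⟩ false) else 0) else 0 := rfl

/-- The involution of configurations flipping the occupation at `x`. -/
def flipEquiv {a b : ℤ} (x : {i : ℤ // i ∈ Finset.Icc a b}) : Config a b ≃ Config a b where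
  toFun g := Function.update g x (!(g x))
  invFun g := Function.update g x (!(g x))
  left_inv g := by
    funext y
    by_cases hy : y = x
    · subst hy; simp
    · simp [Function.update_of_ne hy]
  right_inv g := by
    funext y
    by_cases hy : y = x
    · subst hy; simp
    · simp [Function.update_of_ne hy]

theorem adjoint_cAnn (a b i : ℤ) : LinearMap.adjoint (cAnn a b i) = cCr a b i := by
  symm
  rw [LinearMap.eq_adjoint_iff]
  intro x y
  by_cases hi : i ∈ Finset.Icc a b
  case neg =>
    have h1 : cCr a b i x = 0 := by
      rw [WithLp.ext_iff]; funext g; rw [cCr_apply, dif_neg hi]; rfl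
    have h2 : cAnn a b i y = 0 := by
      rw [WithLp.ext_iff]; funext g; rw [cAnn_apply, dif_neg hi]; rfl
    rw [h1, h2, inner_zero_left, inner_zero_right]
  case pos =>
    rw [PiLp.inner_apply, PiLp.inner_apply]
    apply Fintype.sum_equiv (flipEquiv (⟨i, hi⟩ : {x : ℤ // x ∈ Finset.Icc a b}))
    intro g
    simp only [RCLike.inner_apply, flipEquiv, Equiv.coe_fn_mk]
    rw [cCr_apply, cAnn_apply, dif_pos hi, dif_pos hi]
    cases hgz : g ⟨i, hi⟩
    case false =>
      simp only [hgz]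
      rw [show ((!false : Bool)) = true from rfl]
      rw [if_neg (by simp), if_neg (by simp [Function.update_self])]
      simp
    case true =>
      simp only [hgz]
      rw [show ((!true : Bool)) = false from rfl]
      rw [Function.update_self]
      rw [if_pos rfl]
      rw [if_pos trivial]
      rw [sc_update_of_not_lt g ⟨i, hi⟩ false i (lt_irrefl i), Function.update_idem]
      have h1 : Function.update g (⟨i, hi⟩ : {x : ℤ // x ∈ Finset.Icc a b}) true = g := by
        conv_rhs => rw [← Function.update_eq_self (⟨i, hi⟩ : {x : ℤ // x ∈ Finset.Icc a b}) g]
        rw [hgz]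
      rw [h1, map_mul]
      have h2 : (starRingEnd ℂ) ((-1 : ℂ) ^ signCount a b g i) = (-1) ^ signCount a b g i := by
        simp [map_pow]
      rw [h2]
      ring

theorem adjoint_cCr (a b i : ℤ) : LinearMap.adjoint (cCr a b i) = cAnn a b i := by
  rw [← adjoint_cAnn, LinearMap.adjoint_adjoint]

@[simp] theorem zeta_one (a b i : ℤ) : zeta a b i 1 = cCr a b i := if_pos rfl

@[simp] theorem zeta_neg_one (a b i : ℤ) : zeta a b i (-1) = cAnn a b i := by
  norm_num [zeta]

theorem qOp_eq (a b i : ℤ) :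
    qOp a b i = PL a b [(2 * i + 1, -1), (2 * i, 1), (2 * i - 1, -1)] := by
  simp [qOp, PL_cons, zeta_one, zeta_neg_one, mul_assoc]

theorem adjoint_qOp (a b i : ℤ) :
    LinearMap.adjoint (qOp a b i) = PL a b [(2 * i - 1, 1), (2 * i, -1), (2 * i + 1, 1)] := by
  rw [qOp, ← LinearMap.star_eq_adjoint, star_mul, star_mul]
  simp only [LinearMap.star_eq_adjoint, adjoint_cAnn, adjoint_cCr]
  simp [PL_cons, zeta_one, zeta_neg_one, mul_assoc]
theorem disjoint_anti (a b k l : ℤ) (hkl : k < l) (f : ℤ → ℤ) (L : List (ℤ × ℤ))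
    (hodd : Odd L.length) (hL : ∀ p ∈ L, p.1 < 2 * k ∨ 2 * l < p.1) :
    PL a b L * QF a b k l f + QF a b k l f * PL a b L = 0 := by
  rw [QF_eq_PL]
  apply PL_anticomm_odd
  · intro p hp q hq
    obtain ⟨j, hj, rfl⟩ := List.mem_map.mp hq
    have hjr := List.mem_range.mp hj
    have hj2 : (j : ℤ) ≤ 2 * l - 2 * k := by omega
    rcases hL p hp with h | h <;> (show p.1 ≠ 2 * k + (j : ℤ)) <;> omega
  · exact hodd
  · rw [List.length_map, List.length_range]
    exact ⟨(l - k).toNat, by omega⟩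

theorem exists_site (k l : ℤ) (hkl : k < l) (f : ℤ → ℤ) (hf : memXi k l f)
    (c : ℤ) (hc : c = 1 ∨ c = -1) (i : ℤ) (hki : k ≤ i) (hil : i ≤ l) :
    ∃ s, 2 * k ≤ s ∧ s ≤ 2 * l ∧
      ((s = 2 * i - 1 ∧ f s = -c) ∨ (s = 2 * i ∧ f s = c) ∨ (s = 2 * i + 1 ∧ f s = -c)) := by
  obtain ⟨hmem, hint, hbk, hbl⟩ := hf
  have hval : ∀ t, 2 * k ≤ t → t ≤ 2 * l → f t = c ∨ f t = -c := by
    intro t h1 h2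
    have := hmem t (Finset.mem_Icc.mpr ⟨h1, h2⟩)
    rcases this with h | h <;> rcases hc with h' | h' <;> omega
  rcases eq_or_lt_of_le hki with heq | hk'
  · -- i = k
    have hbk' : f (2 * i) = f (2 * i + 1) := by
      rw [show (2 * i : ℤ) = 2 * k by omega]
      exact hbk
    rcases hval (2 * i) (by omega) (by omega) with h | h
    · exact ⟨2 * i, by omega, by omega, Or.inr (Or.inl ⟨rfl, h⟩)⟩
    · refine ⟨2 * i + 1, by omega, by omega, Or.inr (Or.inr ⟨rfl, ?_⟩)⟩
      rw [← hbk']; exact h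
  · rcases eq_or_lt_of_le hil with heq | hl'
    · -- i = l
      have hbl' : f (2 * i - 1) = f (2 * i) := by
        rw [show (2 * i : ℤ) = 2 * l by omega]
        exact hbl
      rcases hval (2 * i - 1) (by omega) (by omega) with h | h
      · refine ⟨2 * i, by omega, by omega, Or.inr (Or.inl ⟨rfl, ?_⟩)⟩
        rw [← hbl']; exact h
      · exact ⟨2 * i - 1, by omega, by omega, Or.inl ⟨rfl, h⟩⟩
    · -- k < i < l
      by_cases h1 : f (2 * i - 1) = -c
      · exact ⟨2 * i - 1, by omega, by omega, Or.inl ⟨rfl, h1⟩⟩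
      by_cases h2 : f (2 * i) = c
      · exact ⟨2 * i, by omega, by omega, Or.inr (Or.inl ⟨rfl, h2⟩)⟩
      by_cases h3 : f (2 * i + 1) = -c
      · exact ⟨2 * i + 1, by omega, by omega, Or.inr (Or.inr ⟨rfl, h3⟩)⟩
      exfalso
      have e1 : f (2 * i - 1) = c := by
        rcases hval (2 * i - 1) (by omega) (by omega) with h | h
        · exact h
        · exact absurd h h1
      have e2 : f (2 * i) = -c := by
        rcases hval (2 * i) (by omega) (by omega) with h | h
        · exact absurd h h2
        · exact h
      have e3 : f (2 * i + 1) = c := by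
        rcases hval (2 * i + 1) (by omega) (by omega) with h | h
        · exact h
        · exact absurd h h3
      rcases hc with rfl | rfl
      · exact (hint i hk' hl').2 ⟨by omega, by omega, by omega⟩
      · exact (hint i hk' hl').1 ⟨by omega, by omega, by omega⟩

theorem q_anti (a b k l : ℤ) (hkl : k < l) (f : ℤ → ℤ) (hf : memXi k l f) (i : ℤ) :
    qOp a b i * QF a b k l f + QF a b k l f * qOp a b i = 0 := by
  rw [qOp_eq]
  by_cases hik : i < k
  · apply disjoint_anti a b k l hkl f _ ⟨1, by norm_num⟩
    intro p hp
    simp only [List.mem_cons, List.not_mem_nil, or_false] at hp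
    rcases hp with rfl | rfl | rfl <;> left <;> simp <;> omega
  by_cases hli : l < i
  · apply disjoint_anti a b k l hkl f _ ⟨1, by norm_num⟩
    intro p hp
    simp only [List.mem_cons, List.not_mem_nil, or_false] at hp
    rcases hp with rfl | rfl | rfl <;> right <;> simp <;> omega
  obtain ⟨s, hs1, hs2, hcase⟩ :=
    exists_site k l hkl f hf 1 (Or.inl rfl) i (by omega) (by omega)
  rcases hcase with ⟨rfl, hfs⟩ | ⟨rfl, hfs⟩ | ⟨rfl, hfs⟩
  · exact local_anti a b k l f hkl.le (2 * i - 1) (-1) hs1 hs2 (by omega)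
      [(2 * i + 1, -1), (2 * i, 1)] []
      (by intro p hp; simp only [List.mem_cons, List.not_mem_nil, or_false] at hp
          rcases hp with rfl | rfl <;> simp <;> omega)
      (by intro p hp; simp at hp)
  · exact local_anti a b k l f hkl.le (2 * i) 1 hs1 hs2 (by omega)
      [(2 * i + 1, -1)] [(2 * i - 1, -1)]
      (by intro p hp; simp only [List.mem_cons, List.not_mem_nil, or_false] at hp
          rcases hp with rfl <;> simp <;> omega)
      (by intro p hp; simp only [List.mem_cons, List.not_mem_nil, or_false] at hp
          rcases hp with rfl <;> simp <;> omega)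
  · exact local_anti a b k l f hkl.le (2 * i + 1) (-1) hs1 hs2 (by omega)
      [] [(2 * i, 1), (2 * i - 1, -1)]
      (by intro p hp; simp at hp)
      (by intro p hp; simp only [List.mem_cons, List.not_mem_nil, or_false] at hp
          rcases hp with rfl | rfl <;> simp <;> omega)

theorem qstar_anti (a b k l : ℤ) (hkl : k < l) (f : ℤ → ℤ) (hf : memXi k l f) (i : ℤ) :
    PL a b [(2 * i - 1, 1), (2 * i, -1), (2 * i + 1, 1)] * QF a b k l f
      + QF a b k l f * PL a b [(2 * i - 1, 1), (2 * i, -1), (2 * i + 1, 1)] = 0 := by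
  by_cases hik : i < k
  · apply disjoint_anti a b k l hkl f _ ⟨1, by norm_num⟩
    intro p hp
    simp only [List.mem_cons, List.not_mem_nil, or_false] at hp
    rcases hp with rfl | rfl | rfl <;> left <;> simp <;> omega
  by_cases hli : l < i
  · apply disjoint_anti a b k l hkl f _ ⟨1, by norm_num⟩
    intro p hp
    simp only [List.mem_cons, List.not_mem_nil, or_false] at hp
    rcases hp with rfl | rfl | rfl <;> right <;> simp <;> omega
  obtain ⟨s, hs1, hs2, hcase⟩ :=
    exists_site k l hkl f hf (-1) (Or.inr rfl) i (by omega) (by omega)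
  rcases hcase with ⟨rfl, hfs⟩ | ⟨rfl, hfs⟩ | ⟨rfl, hfs⟩
  · exact local_anti a b k l f hkl.le (2 * i - 1) 1 hs1 hs2 (by omega)
      [] [(2 * i, -1), (2 * i + 1, 1)]
      (by intro p hp; simp at hp)
      (by intro p hp; simp only [List.mem_cons, List.not_mem_nil, or_false] at hp
          rcases hp with rfl | rfl <;> simp <;> omega)
  · exact local_anti a b k l f hkl.le (2 * i) (-1) hs1 hs2 (by omega)
      [(2 * i - 1, 1)] [(2 * i + 1, 1)]
      (by intro p hp; simp only [List.mem_cons, List.not_mem_nil, or_false] at hp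
          rcases hp with rfl <;> simp <;> omega)
      (by intro p hp; simp only [List.mem_cons, List.not_mem_nil, or_false] at hp
          rcases hp with rfl <;> simp <;> omega)
  · exact local_anti a b k l f hkl.le (2 * i + 1) 1 hs1 hs2 (by omega)
      [(2 * i - 1, 1), (2 * i, -1)] []
      (by intro p hp; simp only [List.mem_cons, List.not_mem_nil, or_false] at hp
          rcases hp with rfl | rfl <;> simp <;> omega)
      (by intro p hp; simp at hp)
end Helpers

set_option maxHeartbeats 1000000 in
set_option synthInstance.maxHeartbeats 400000 in
/-- the Nicolai supercharge and its adjoint anticommute with every local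
fermion operator `Q(f)` and with its adjoint. -/
theorem nicolai_supercharge_anticommutes_local_charges (a b p q : ℤ) (hpq : p ≤ q)
    (hS : Finset.Icc (2 * p - 1) (2 * q + 1) ⊆ Finset.Icc a b)
    (k l : ℤ) (hpk : p ≤ k) (hkl : k < l) (hlq : l ≤ q)
    (f : ℤ → ℤ) (hf : memXi k l f) :
    QNic a b p q * QF a b k l f + QF a b k l f * QNic a b p q = 0 ∧
    LinearMap.adjoint (QNic a b p q) * QF a b k l f
      + QF a b k l f * LinearMap.adjoint (QNic a b p q) = 0 ∧
    QNic a b p q * LinearMap.adjoint (QF a b k l f)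
      + LinearMap.adjoint (QF a b k l f) * QNic a b p q = 0 ∧
    LinearMap.adjoint (QNic a b p q) * LinearMap.adjoint (QF a b k l f)
      + LinearMap.adjoint (QF a b k l f) * LinearMap.adjoint (QNic a b p q) = 0 := by
  have h1 : QNic a b p q * QF a b k l f + QF a b k l f * QNic a b p q = 0 := by
    rw [QNic, Finset.sum_mul, Finset.mul_sum, ← Finset.sum_add_distrib]
    apply Finset.sum_eq_zero
    intro i _
    exact q_anti a b k l hkl f hf i
  have h2 : LinearMap.adjoint (QNic a b p q) * QF a b k l f
      + QF a b k l f * LinearMap.adjoint (QNic a b p q) = 0 := by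
    have hadj : LinearMap.adjoint (QNic a b p q)
        = ∑ i ∈ Finset.Icc p q, LinearMap.adjoint (qOp a b i) := by
      rw [← LinearMap.star_eq_adjoint, QNic, star_sum]
      simp only [LinearMap.star_eq_adjoint]
    rw [hadj, Finset.sum_mul, Finset.mul_sum, ← Finset.sum_add_distrib]
    apply Finset.sum_eq_zero
    intro i _
    rw [adjoint_qOp]
    exact qstar_anti a b k l hkl f hf i
  have h3 : QNic a b p q * LinearMap.adjoint (QF a b k l f)
      + LinearMap.adjoint (QF a b k l f) * QNic a b p q = 0 := by
    have h := congrArg (star : Module.End ℂ (Hs a b) → Module.End ℂ (Hs a b)) h2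
    simp only [star_add, star_mul, star_zero, LinearMap.star_eq_adjoint,
      LinearMap.adjoint_adjoint] at h
    rw [add_comm]
    exact h
  have h4 : LinearMap.adjoint (QNic a b p q) * LinearMap.adjoint (QF a b k l f)
      + LinearMap.adjoint (QF a b k l f) * LinearMap.adjoint (QNic a b p q) = 0 := by
    have h := congrArg (star : Module.End ℂ (Hs a b) → Module.End ℂ (Hs a b)) h1
    simp only [star_add, star_mul, star_zero, LinearMap.star_eq_adjoint] at h
    rw [add_comm]
    exact h
  exact ⟨h1, h2, h3, h4⟩

end Nicolai
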